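/- Let Z ∈ ℝ^{M×I} with singular value decomposition Z = UΣV^⊤, where Σ = diag(σ_1, …, σ_R) and R = min{M, I}. For ρ > 0, the singular value thresholding operator D_{1/ρ}(Z) = U [Σ − (1/ρ)I]_+ V^⊤ is the unique minimizer of the function X ↦ ‖X‖_* + (ρ/2)‖X − Z‖_F² over ℝ^{M×I}, where ‖X‖_* denotes the matrix nuclear norm (sum of singular values) and [·]_+ denotes entrywise positive truncation max{·, 0}. -/

import Mathlib

open Matrix

/-- Nuclear norm of a real matrix: the sum of its singular values, i.e. the sum
of the square roots of the eigenvalues of `AᴴA`. -/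
noncomputable def nuclearNorm {M I : ℕ} (A : Matrix (Fin M) (Fin I) ℝ) : ℝ :=
  ∑ i, Real.sqrt ((Matrix.isHermitian_conjTranspose_mul_self A).eigenvalues i)

/-- Squared Frobenius norm of a matrix. -/
def frobSq {a b : ℕ} (A : Matrix (Fin a) (Fin b) ℝ) : ℝ :=
  ∑ i, ∑ j, (A i j) ^ 2

/-! ### Auxiliary material -/

open scoped MatrixOrder

/-- Frobenius inner product of two matrices. -/
noncomputable def ipm {m n : ℕ} (A B : Matrix (Fin m) (Fin n) ℝ) : ℝ :=
  ∑ i, ∑ j, A i j * B i j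

lemma ipm_comm {m n : ℕ} (A B : Matrix (Fin m) (Fin n) ℝ) : ipm A B = ipm B A := by
  simp [ipm, mul_comm]

lemma ipm_sub_left {m n : ℕ} (A B C : Matrix (Fin m) (Fin n) ℝ) :
    ipm (A - B) C = ipm A C - ipm B C := by
  simp [ipm, Matrix.sub_apply, sub_mul, Finset.sum_sub_distrib]

lemma ipm_smul_right {m n : ℕ} (r : ℝ) (A B : Matrix (Fin m) (Fin n) ℝ) :
    ipm A (r • B) = r * ipm A B := by
  simp [ipm, Matrix.smul_apply, Finset.mul_sum]
  congr 1; ext i; congr 1; ext j; ring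

lemma ipm_sub_right {m n : ℕ} (A B C : Matrix (Fin m) (Fin n) ℝ) :
    ipm A (B - C) = ipm A B - ipm A C := by
  simp [ipm, Matrix.sub_apply, mul_sub, Finset.sum_sub_distrib]

lemma ipm_neg_right {m n : ℕ} (A B : Matrix (Fin m) (Fin n) ℝ) :
    ipm A (-B) = - ipm A B := by
  simp [ipm, Matrix.neg_apply, Finset.sum_neg_distrib]

lemma frobSq_add_expand {m n : ℕ} (A B : Matrix (Fin m) (Fin n) ℝ) :
    frobSq (A + B) = frobSq A + 2 * ipm A B + frobSq B := by
  have h : ∀ i j, (A i j + B i j) ^ 2 = A i j ^ 2 + 2 * (A i j * B i j) + B i j ^ 2 := by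
    intro i j; ring
  simp only [frobSq, ipm, Matrix.add_apply, h, Finset.sum_add_distrib, Finset.mul_sum]

lemma frobSq_nonneg {m n : ℕ} (A : Matrix (Fin m) (Fin n) ℝ) : 0 ≤ frobSq A := by
  apply Finset.sum_nonneg; intro i _; apply Finset.sum_nonneg; intro j _; positivity

lemma eq_of_frobSq_sub_eq_zero {m n : ℕ} {A B : Matrix (Fin m) (Fin n) ℝ}
    (h : frobSq (A - B) = 0) : A = B := by
  ext i j
  have h1 : ∀ i ∈ Finset.univ, (0:ℝ) ≤ ∑ j, ((A - B) i j) ^ 2 := by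
    intro i _; apply Finset.sum_nonneg; intro j _; positivity
  have h2 := (Finset.sum_eq_zero_iff_of_nonneg h1).mp h i (Finset.mem_univ i)
  have h3 : ∀ j ∈ Finset.univ, (0:ℝ) ≤ ((A - B) i j) ^ 2 := by
    intro j _; positivity
  have h4 := (Finset.sum_eq_zero_iff_of_nonneg h3).mp h2 j (Finset.mem_univ j)
  have h5 : (A - B) i j = 0 := by
    have := sq_eq_zero_iff.mp h4; exact this
  have := Matrix.sub_apply A B i j ▸ h5
  linarith [this]

lemma svtAux_dot_AtA {m n : ℕ} (A : Matrix (Fin m) (Fin n) ℝ) (y : Fin n → ℝ) :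
    y ⬝ᵥ ((Aᵀ * A) *ᵥ y) = (A *ᵥ y) ⬝ᵥ (A *ᵥ y) := by
  rw [← Matrix.mulVec_mulVec, Matrix.dotProduct_mulVec, Matrix.vecMul_transpose]

lemma svtAux_dot_nonneg {n : ℕ} (y : Fin n → ℝ) : 0 ≤ y ⬝ᵥ y :=
  Finset.sum_nonneg fun _ _ => mul_self_nonneg _

lemma svtAux_contraction {M I R : ℕ} (U : Matrix (Fin M) (Fin R) ℝ)
    (V : Matrix (Fin I) (Fin R) ℝ) (d : Fin R → ℝ)
    (hU : Uᵀ * U = 1) (hV : Vᵀ * V = 1) (hd0 : ∀ i, 0 ≤ d i) (hd1 : ∀ i, d i ≤ 1)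
    (w : Fin I → ℝ) :
    ((U * Matrix.diagonal d * Vᵀ) *ᵥ w) ⬝ᵥ ((U * Matrix.diagonal d * Vᵀ) *ᵥ w) ≤ w ⬝ᵥ w := by
  have hGw : (U * Matrix.diagonal d * Vᵀ) *ᵥ w
      = U *ᵥ (Matrix.diagonal d *ᵥ (Vᵀ *ᵥ w)) := by
    rw [Matrix.mulVec_mulVec, Matrix.mulVec_mulVec]
  have hUiso : ∀ y : Fin R → ℝ, (U *ᵥ y) ⬝ᵥ (U *ᵥ y) = y ⬝ᵥ y := by
    intro y
    rw [← svtAux_dot_AtA, hU, Matrix.one_mulVec]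
  have hDle : ∀ c : Fin R → ℝ, (Matrix.diagonal d *ᵥ c) ⬝ᵥ (Matrix.diagonal d *ᵥ c) ≤ c ⬝ᵥ c := by
    intro c
    simp only [dotProduct, Matrix.mulVec_diagonal]
    apply Finset.sum_le_sum
    intro i _
    have hdd : d i * d i ≤ 1 := mul_le_one₀ (hd1 i) (hd0 i) (hd1 i)
    nlinarith [hdd, mul_self_nonneg (c i)]
  have hproj : (Vᵀ *ᵥ w) ⬝ᵥ (Vᵀ *ᵥ w) ≤ w ⬝ᵥ w := by
    set P : Matrix (Fin I) (Fin I) ℝ := V * Vᵀ with hP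
    have h1 : (Vᵀ *ᵥ w) ⬝ᵥ (Vᵀ *ᵥ w) = w ⬝ᵥ (P *ᵥ w) := by
      rw [← svtAux_dot_AtA Vᵀ w, Matrix.transpose_transpose]
    have hPP : Pᵀ * P = P := by
      rw [hP, Matrix.transpose_mul, Matrix.transpose_transpose, Matrix.mul_assoc,
        ← Matrix.mul_assoc Vᵀ, hV, Matrix.one_mul]
    have h2 : (P *ᵥ w) ⬝ᵥ (P *ᵥ w) = w ⬝ᵥ (P *ᵥ w) := by
      rw [← svtAux_dot_AtA P w, hPP]
    have hcs : w ⬝ᵥ (P *ᵥ w) ≤ Real.sqrt (w ⬝ᵥ w) * Real.sqrt ((P *ᵥ w) ⬝ᵥ (P *ᵥ w)) := by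
      have h1' : (∑ i, w i * (P *ᵥ w) i)^2 ≤ (∑ i, w i ^2) * (∑ i, (P *ᵥ w) i ^2) :=
        Finset.sum_mul_sq_le_sq_mul_sq _ _ _
      calc w ⬝ᵥ (P *ᵥ w) ≤ |∑ i, w i * (P *ᵥ w) i| := le_abs_self _
        _ = Real.sqrt ((∑ i, w i * (P *ᵥ w) i)^2) := (Real.sqrt_sq_eq_abs _).symm
        _ ≤ Real.sqrt ((∑ i, w i ^2) * (∑ i, (P *ᵥ w) i ^2)) := Real.sqrt_le_sqrt h1'
        _ = _ := by
            rw [Real.sqrt_mul (by positivity)]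
            simp [dotProduct, pow_two]
    rw [h1]
    have ht0 : 0 ≤ w ⬝ᵥ (P *ᵥ w) := by rw [← h1]; exact svtAux_dot_nonneg _
    have hw0 : 0 ≤ w ⬝ᵥ w := svtAux_dot_nonneg _
    rw [h2] at hcs
    set a := Real.sqrt (w ⬝ᵥ (P *ᵥ w)) with ha
    set b := Real.sqrt (w ⬝ᵥ w) with hb
    have ha2 : a^2 = w ⬝ᵥ (P *ᵥ w) := Real.sq_sqrt ht0
    have hb2 : b^2 = w ⬝ᵥ w := Real.sq_sqrt hw0
    have ha0 : 0 ≤ a := Real.sqrt_nonneg _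
    nlinarith [sq_nonneg (a - b), hcs, ha2, hb2]
  calc ((U * Matrix.diagonal d * Vᵀ) *ᵥ w) ⬝ᵥ ((U * Matrix.diagonal d * Vᵀ) *ᵥ w)
      = (Matrix.diagonal d *ᵥ (Vᵀ *ᵥ w)) ⬝ᵥ (Matrix.diagonal d *ᵥ (Vᵀ *ᵥ w)) := by
        rw [hGw, hUiso]
    _ ≤ (Vᵀ *ᵥ w) ⬝ᵥ (Vᵀ *ᵥ w) := hDle _
    _ ≤ w ⬝ᵥ w := hproj

lemma svtAux_ip_UdV {M I R : ℕ} (U : Matrix (Fin M) (Fin R) ℝ)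
    (V : Matrix (Fin I) (Fin R) ℝ) (hU : Uᵀ * U = 1) (hV : Vᵀ * V = 1)
    (d e : Fin R → ℝ) :
    ipm (U * Matrix.diagonal d * Vᵀ) (U * Matrix.diagonal e * Vᵀ) = ∑ i, d i * e i := by
  have h1 : ipm (U * Matrix.diagonal d * Vᵀ) (U * Matrix.diagonal e * Vᵀ)
      = ((U * Matrix.diagonal d * Vᵀ)ᵀ * (U * Matrix.diagonal e * Vᵀ)).trace := by
    simp only [ipm, Matrix.trace, Matrix.diag, Matrix.mul_apply, Matrix.transpose_apply]
    exact Finset.sum_comm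
  rw [h1]
  have h2 : (U * Matrix.diagonal d * Vᵀ)ᵀ * (U * Matrix.diagonal e * Vᵀ)
      = V * (Matrix.diagonal (fun i => d i * e i)) * Vᵀ := by
    simp only [Matrix.transpose_mul, Matrix.transpose_transpose, Matrix.diagonal_transpose,
      Matrix.mul_assoc]
    rw [← Matrix.mul_assoc Uᵀ U, hU, Matrix.one_mul, ← Matrix.mul_assoc (Matrix.diagonal d),
      Matrix.diagonal_mul_diagonal]
  rw [h2, Matrix.trace_mul_comm, ← Matrix.mul_assoc, hV, Matrix.one_mul,
    Matrix.trace_diagonal]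

lemma nuclearNorm_eq_trace_sqrt {M I : ℕ} (A : Matrix (Fin M) (Fin I) ℝ) :
    nuclearNorm A = (CFC.sqrt (Aᴴ * A)).trace := by
  have hA := Matrix.posSemidef_conjTranspose_mul_self A
  rw [CFC.sqrt_eq_cfc, cfc_nnreal_eq_real _ _ hA.nonneg, hA.1.cfc_eq, IsHermitian.cfc,
    Unitary.conjStarAlgAut_apply, Matrix.trace_mul_comm, ← Matrix.mul_assoc,
    Unitary.coe_star_mul_self, one_mul]
  simp only [nuclearNorm, Matrix.trace_diagonal]
  refine Finset.sum_congr rfl fun i _ => ?_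
  simp only [Function.comp_apply, Real.coe_sqrt, Real.coe_toNNReal', RCLike.ofReal_real_eq_id,
    id_eq]
  rw [max_eq_left (hA.eigenvalues_nonneg i)]

lemma svtAux_nuclearNorm_UdV {M I R : ℕ} (U : Matrix (Fin M) (Fin R) ℝ)
    (V : Matrix (Fin I) (Fin R) ℝ) (τ : Fin R → ℝ)
    (hU : Uᵀ * U = 1) (hV : Vᵀ * V = 1) (hτ : ∀ i, 0 ≤ τ i) :
    nuclearNorm (U * Matrix.diagonal τ * Vᵀ) = ∑ i, τ i := by
  set Xh := U * Matrix.diagonal τ * Vᵀ with hXh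
  set B : Matrix (Fin I) (Fin I) ℝ := V * Matrix.diagonal τ * Vᵀ with hB
  have hBpsd : B.PosSemidef := by
    have hps := Matrix.posSemidef_conjTranspose_mul_self
      (Matrix.diagonal (fun i => Real.sqrt (τ i)) * Vᵀ)
    have heq : (Matrix.diagonal (fun i => Real.sqrt (τ i)) * Vᵀ)ᴴ *
        (Matrix.diagonal (fun i => Real.sqrt (τ i)) * Vᵀ) = B := by
      rw [Matrix.conjTranspose_eq_transpose_of_trivial, Matrix.transpose_mul,
        Matrix.transpose_transpose, Matrix.diagonal_transpose, Matrix.mul_assoc,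
        ← Matrix.mul_assoc (Matrix.diagonal fun i => Real.sqrt (τ i)),
        Matrix.diagonal_mul_diagonal,
        show (fun i => Real.sqrt (τ i) * Real.sqrt (τ i)) = τ from
          funext fun i => Real.mul_self_sqrt (hτ i), hB, Matrix.mul_assoc]
    rwa [heq] at hps
  have hB2 : B ^ 2 = Xhᴴ * Xh := by
    rw [pow_two, hB, hXh, Matrix.conjTranspose_eq_transpose_of_trivial]
    simp only [Matrix.transpose_mul, Matrix.transpose_transpose, Matrix.diagonal_transpose,
      Matrix.mul_assoc]
    rw [← Matrix.mul_assoc Vᵀ V, hV, Matrix.one_mul,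
      ← Matrix.mul_assoc Uᵀ U, hU, Matrix.one_mul]
  have hsqrt : B = CFC.sqrt (Xhᴴ * Xh) := by
    rw [← hB2]; exact (CFC.sqrt_sq B hBpsd.nonneg).symm
  rw [nuclearNorm_eq_trace_sqrt, ← hsqrt, hB, Matrix.trace_mul_comm, ← Matrix.mul_assoc,
    hV, Matrix.one_mul, Matrix.trace_diagonal]

lemma svtAux_ip_le_nuclearNorm {M I : ℕ} (G X : Matrix (Fin M) (Fin I) ℝ)
    (hG : ∀ w : Fin I → ℝ, (G *ᵥ w) ⬝ᵥ (G *ᵥ w) ≤ w ⬝ᵥ w) :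
    ipm G X ≤ nuclearNorm X := by
  set h := Matrix.isHermitian_conjTranspose_mul_self X with hh
  set W : Matrix (Fin I) (Fin I) ℝ := (h.eigenvectorUnitary : Matrix (Fin I) (Fin I) ℝ) with hW
  set v : Fin I → (Fin I → ℝ) := fun j => ⇑(h.eigenvectorBasis j) with hv
  have hWv : ∀ a j, W a j = v j a := fun a j => h.eigenvectorUnitary_apply a j
  have hWW : W * Wᵀ = 1 := by
    have h1 : W * star W = 1 := (Matrix.mem_unitaryGroup_iff).mp h.eigenvectorUnitary.2
    rwa [Matrix.star_eq_conjTranspose, Matrix.conjTranspose_eq_transpose_of_trivial] at h1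
  have hvnorm : ∀ j, v j ⬝ᵥ v j = 1 := by
    intro j
    have h1 := h.eigenvectorBasis.orthonormal.1 j
    have h2 : (v j) ⬝ᵥ (v j) = ‖h.eigenvectorBasis j‖^2 := by
      rw [← real_inner_self_eq_norm_sq]
      rw [EuclideanSpace.inner_eq_star_dotProduct]; simp [hv, dotProduct]
    rw [h2, h1]; norm_num
  have hXv : ∀ j, (X *ᵥ v j) ⬝ᵥ (X *ᵥ v j) = h.eigenvalues j := by
    intro j
    have key : v j ⬝ᵥ ((Xᴴ * X) *ᵥ v j) = (X *ᵥ v j) ⬝ᵥ (X *ᵥ v j) := by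
      rw [show Xᴴ = Xᵀ from Matrix.conjTranspose_eq_transpose_of_trivial X,
        ← Matrix.mulVec_mulVec, Matrix.dotProduct_mulVec, Matrix.vecMul_transpose]
    rw [← key, h.mulVec_eigenvectorBasis j]
    simp only [dotProduct_smul, smul_eq_mul]
    rw [hvnorm j, mul_one]
  have hexp : ipm G X = ∑ j, (G *ᵥ v j) ⬝ᵥ (X *ᵥ v j) := by
    have e1 : ∀ j, (G *ᵥ v j) ⬝ᵥ (X *ᵥ v j) = ((G * W)ᵀ * (X * W)) j j := by
      intro j
      simp only [dotProduct, Matrix.mul_apply, Matrix.transpose_apply,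
        Matrix.mulVec, dotProduct, hWv]
    have e2 : ∑ j, (G *ᵥ v j) ⬝ᵥ (X *ᵥ v j) = ((G * W)ᵀ * (X * W)).trace := by
      simp only [e1, Matrix.trace, Matrix.diag]
    have e3 : (G * W)ᵀ * (X * W) = (Wᵀ * (Gᵀ * X)) * W := by
      simp only [Matrix.transpose_mul, Matrix.mul_assoc]
    have e4 : ipm G X = (Gᵀ * X).trace := by
      simp only [ipm, Matrix.trace, Matrix.diag, Matrix.mul_apply, Matrix.transpose_apply]
      exact Finset.sum_comm
    rw [e2, e3, Matrix.trace_mul_comm, ← Matrix.mul_assoc, hWW, Matrix.one_mul, e4]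
  rw [hexp]
  have hnn : nuclearNorm X = ∑ j, Real.sqrt (h.eigenvalues j) := rfl
  rw [hnn]
  apply Finset.sum_le_sum
  intro j _
  have hcs : (G *ᵥ v j) ⬝ᵥ (X *ᵥ v j)
      ≤ Real.sqrt ((G *ᵥ v j) ⬝ᵥ (G *ᵥ v j)) * Real.sqrt ((X *ᵥ v j) ⬝ᵥ (X *ᵥ v j)) := by
    have h1' : (∑ i, (G *ᵥ v j) i * (X *ᵥ v j) i)^2
        ≤ (∑ i, (G *ᵥ v j) i ^2) * (∑ i, (X *ᵥ v j) i ^2) :=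
      Finset.sum_mul_sq_le_sq_mul_sq _ _ _
    calc (G *ᵥ v j) ⬝ᵥ (X *ᵥ v j) ≤ |∑ i, (G *ᵥ v j) i * (X *ᵥ v j) i| := le_abs_self _
      _ = Real.sqrt ((∑ i, (G *ᵥ v j) i * (X *ᵥ v j) i)^2) := (Real.sqrt_sq_eq_abs _).symm
      _ ≤ Real.sqrt ((∑ i, (G *ᵥ v j) i ^2) * (∑ i, (X *ᵥ v j) i ^2)) := Real.sqrt_le_sqrt h1'
      _ = _ := by
          rw [Real.sqrt_mul (by positivity)]
          simp [dotProduct, pow_two]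
  calc (G *ᵥ v j) ⬝ᵥ (X *ᵥ v j)
      ≤ Real.sqrt ((G *ᵥ v j) ⬝ᵥ (G *ᵥ v j)) * Real.sqrt ((X *ᵥ v j) ⬝ᵥ (X *ᵥ v j)) := hcs
    _ ≤ 1 * Real.sqrt (h.eigenvalues j) := by
        apply mul_le_mul _ (le_of_eq (by rw [hXv j])) (Real.sqrt_nonneg _) one_pos.le
        calc Real.sqrt ((G *ᵥ v j) ⬝ᵥ (G *ᵥ v j)) ≤ Real.sqrt (v j ⬝ᵥ v j) :=
              Real.sqrt_le_sqrt (hG _)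
          _ = 1 := by rw [hvnorm j, Real.sqrt_one]
    _ = Real.sqrt (h.eigenvalues j) := one_mul _

/-- Singular value thresholding `D_{1/ρ}(Z) = U[Σ − (1/ρ)I]₊Vᵀ` is the unique
minimizer of `X ↦ ‖X‖_* + (ρ/2)‖X − Z‖_F²`. -/
theorem svt_unique_minimizer {M I R : ℕ} (hR : R = min M I) (ρ : ℝ) (hρ : 0 < ρ)
    (U : Matrix (Fin M) (Fin R) ℝ) (V : Matrix (Fin I) (Fin R) ℝ) (σ : Fin R → ℝ)
    (hU : Uᵀ * U = 1) (hV : Vᵀ * V = 1) (hσ : ∀ i, 0 ≤ σ i)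
    (Z : Matrix (Fin M) (Fin I) ℝ) (hZ : Z = U * Matrix.diagonal σ * Vᵀ) :
    (∀ X : Matrix (Fin M) (Fin I) ℝ,
        nuclearNorm (U * Matrix.diagonal (fun i => max (σ i - 1 / ρ) 0) * Vᵀ) +
          (ρ / 2) * frobSq (U * Matrix.diagonal (fun i => max (σ i - 1 / ρ) 0) * Vᵀ - Z) ≤
        nuclearNorm X + (ρ / 2) * frobSq (X - Z)) ∧
      (∀ X : Matrix (Fin M) (Fin I) ℝ,
        nuclearNorm X + (ρ / 2) * frobSq (X - Z) =
          nuclearNorm (U * Matrix.diagonal (fun i => max (σ i - 1 / ρ) 0) * Vᵀ) +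
            (ρ / 2) * frobSq (U * Matrix.diagonal (fun i => max (σ i - 1 / ρ) 0) * Vᵀ - Z) →
        X = U * Matrix.diagonal (fun i => max (σ i - 1 / ρ) 0) * Vᵀ) := by
  set τ : Fin R → ℝ := fun i => max (σ i - 1 / ρ) 0 with hτdef
  set Xh := U * Matrix.diagonal τ * Vᵀ with hXhdef
  set d : Fin R → ℝ := fun i => ρ * (σ i - τ i) with hddef
  set G := U * Matrix.diagonal d * Vᵀ with hGdef
  have hτ0 : ∀ i, 0 ≤ τ i := fun i => le_max_right _ _
  have hρ' : 0 < 1 / ρ := by positivity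
  have hτσ : ∀ i, τ i ≤ σ i := fun i =>
    max_le (by linarith [hρ'.le]) (hσ i)
  have hd0 : ∀ i, 0 ≤ d i := fun i =>
    mul_nonneg hρ.le (sub_nonneg.mpr (hτσ i))
  have hστ : ∀ i, σ i - τ i ≤ 1 / ρ := by
    intro i
    rcases le_or_gt (σ i) (1 / ρ) with h | h
    · have := hτ0 i; linarith
    · have hτe : τ i = σ i - 1 / ρ := max_eq_left (by linarith)
      rw [hτe]; linarith
  have hd1 : ∀ i, d i ≤ 1 := by
    intro i
    calc d i = ρ * (σ i - τ i) := rfl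
      _ ≤ ρ * (1 / ρ) := by apply mul_le_mul_of_nonneg_left (hστ i) hρ.le
      _ = 1 := by field_simp
  have hdτ : ∀ i, d i * τ i = τ i := by
    intro i
    rcases le_or_gt (σ i) (1 / ρ) with h | h
    · have hτz : τ i = 0 := max_eq_right (by linarith)
      rw [hτz, mul_zero]
    · have hτe : τ i = σ i - 1 / ρ := max_eq_left (by linarith)
      have hde : d i = 1 := by
        show ρ * (σ i - τ i) = 1
        rw [hτe]; field_simp; ring
      rw [hde, one_mul]
  -- G = ρ • (Z - Xh)
  have hsub : Z - Xh = U * Matrix.diagonal (fun i => σ i - τ i) * Vᵀ := by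
    rw [hZ, hXhdef, ← Matrix.sub_mul, ← Matrix.mul_sub, Matrix.diagonal_sub]
  have hGr : G = ρ • (Z - Xh) := by
    have hdiag : Matrix.diagonal d = ρ • Matrix.diagonal (fun i => σ i - τ i) := by
      ext i j
      rcases eq_or_ne i j with rfl | hne
      · simp [Matrix.diagonal_apply_eq]; rfl
      · simp [Matrix.diagonal_apply_ne _ hne]
    rw [hsub, hGdef, hdiag, Matrix.mul_smul, Matrix.smul_mul]
  -- key facts
  have key1 : ipm G Xh = ∑ i, τ i := by
    rw [hGdef, hXhdef, svtAux_ip_UdV U V hU hV]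
    exact Finset.sum_congr rfl fun i _ => hdτ i
  have key2 : nuclearNorm Xh = ∑ i, τ i := svtAux_nuclearNorm_UdV U V τ hU hV hτ0
  have key3 : ∀ X : Matrix (Fin M) (Fin I) ℝ, ipm G X ≤ nuclearNorm X := by
    intro X
    apply svtAux_ip_le_nuclearNorm
    rw [hGdef]
    exact svtAux_contraction U V d hU hV hd0 hd1
  -- master inequality
  have main : ∀ X : Matrix (Fin M) (Fin I) ℝ,
      nuclearNorm Xh + (ρ / 2) * frobSq (Xh - Z) + (ρ / 2) * frobSq (X - Xh)
        ≤ nuclearNorm X + (ρ / 2) * frobSq (X - Z) := by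
    intro X
    have hA : frobSq (X - Z) = frobSq (X - Xh) + 2 * ipm (X - Xh) (Xh - Z) + frobSq (Xh - Z) := by
      have : X - Z = (X - Xh) + (Xh - Z) := by abel
      rw [this, frobSq_add_expand]
    have hBq : ρ * ipm (X - Xh) (Xh - Z) = ipm G Xh - ipm G X := by
      have h1 : ipm (X - Xh) G = ρ * ipm (X - Xh) (Z - Xh) := by
        rw [hGr, ipm_smul_right]
      have h2 : ipm (X - Xh) (Z - Xh) = - ipm (X - Xh) (Xh - Z) := by
        have hzz : Z - Xh = -(Xh - Z) := by abel
        rw [hzz, ipm_neg_right]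
      have h3 : ipm (X - Xh) G = ipm G X - ipm G Xh := by
        rw [ipm_comm, ipm_sub_right]
      rw [h2] at h1
      rw [h3] at h1
      linarith
    rw [hA]
    nlinarith [hBq, key3 X, key1, key2]
  constructor
  · intro X
    have h1 := main X
    have h2 : 0 ≤ (ρ / 2) * frobSq (X - Xh) :=
      mul_nonneg (by positivity) (frobSq_nonneg _)
    linarith
  · intro X hEq
    have h1 := main X
    rw [hEq] at h1
    have h2 : (ρ / 2) * frobSq (X - Xh) ≤ 0 := by linarith
    have h3 : 0 ≤ frobSq (X - Xh) := frobSq_nonneg _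
    have h4 : frobSq (X - Xh) = 0 := by nlinarith
    exact eq_of_frobSq_sub_eq_zero h4
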